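/- For all s, t ≥ 0 with s + t ≤ T and all x ∈ D, one has φ_{t+s}(u) + ψ_{t+s}(u)·x = φ_t(u) + φ_s(ψ_t(u)) + ψ_s(ψ_t(u))·x; consequently, since D has nonempty interior, the semiflow equations hold: φ_{t+s}(u) = φ_t(u) + φ_s(ψ_t(u)) and ψ_{t+s}(u) = ψ_s(ψ_t(u)). -/

import Mathlib

open MeasureTheory Real Matrix ProbabilityTheory

/-- The canonical state space `D = ℝ_{≥0}^m × ℝ^n ⊆ ℝ^{m+n}`. -/
def canonicalStateSpace (m n : ℕ) : Set (Fin (m + n) → ℝ) :=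
  {x | ∀ i : Fin (m + n), (i : ℕ) < m → 0 ≤ x i}

lemma integrable_exp_of_integral_eq_exp {α : Type*} [MeasurableSpace α] (μ : Measure α)
    (f : α → ℝ) (c : ℝ) (h : ∫ y, Real.exp (f y) ∂μ = Real.exp c) :
    Integrable (fun y => Real.exp (f y)) μ := by
  by_contra hc
  rw [integral_undef hc] at h
  exact Real.exp_ne_zero c h.symm

lemma lintegral_exp_eq {α : Type*} [MeasurableSpace α] (μ : Measure α)
    (f : α → ℝ) (c : ℝ) (h : ∫ y, Real.exp (f y) ∂μ = Real.exp c) :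
    ∫⁻ y, ENNReal.ofReal (Real.exp (f y)) ∂μ = ENNReal.ofReal (Real.exp c) := by
  rw [← ofReal_integral_eq_lintegral_ofReal (integrable_exp_of_integral_eq_exp μ f c h)
    (Filter.Eventually.of_forall fun y => (Real.exp_pos _).le), h]

theorem affine_semiflow
    {m n : ℕ} (hm : 1 ≤ m) (T : ℝ) (hT : 0 < T)
    (κ : ℝ → Kernel (canonicalStateSpace m n) (canonicalStateSpace m n))
    (hMarkov : ∀ t : ℝ, 0 ≤ t → t ≤ T → IsMarkovKernel (κ t))
    (hCK : ∀ s t : ℝ, 0 ≤ s → 0 ≤ t → s + t ≤ T →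
      ∀ (x : canonicalStateSpace m n) (A : Set (canonicalStateSpace m n)),
        MeasurableSet A → κ (t + s) x A = ∫⁻ y, κ t y A ∂(κ s x))
    (φ : ℝ → (Fin (m + n) → ℝ) → ℝ) (ψ : ℝ → (Fin (m + n) → ℝ) → (Fin (m + n) → ℝ))
    (u : Fin (m + n) → ℝ)
    (haffine : ∀ t : ℝ, 0 ≤ t → t ≤ T → ∀ x : canonicalStateSpace m n,
      ∫ y : canonicalStateSpace m n, exp (u ⬝ᵥ (y : Fin (m + n) → ℝ)) ∂(κ t x)
        = exp (φ t u + ψ t u ⬝ᵥ (x : Fin (m + n) → ℝ)))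
    (haffine' : ∀ s t : ℝ, 0 ≤ s → 0 ≤ t → s + t ≤ T → ∀ x : canonicalStateSpace m n,
      ∫ y : canonicalStateSpace m n, exp (ψ t u ⬝ᵥ (y : Fin (m + n) → ℝ)) ∂(κ s x)
        = exp (φ s (ψ t u) + ψ s (ψ t u) ⬝ᵥ (x : Fin (m + n) → ℝ))) :
    ∀ s t : ℝ, 0 ≤ s → 0 ≤ t → s + t ≤ T →
      (∀ x : canonicalStateSpace m n,
        φ (t + s) u + ψ (t + s) u ⬝ᵥ (x : Fin (m + n) → ℝ)
          = φ t u + φ s (ψ t u) + ψ s (ψ t u) ⬝ᵥ (x : Fin (m + n) → ℝ)) ∧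
      φ (t + s) u = φ t u + φ s (ψ t u) ∧
      ψ (t + s) u = ψ s (ψ t u) := by
  intro s t hs ht hst
  have htT : t ≤ T := by linarith
  have hsT : s ≤ T := by linarith
  have hts0 : 0 ≤ t + s := by linarith
  have htsT : t + s ≤ T := by linarith
  -- measurability of the exponential of the dot product
  have hmeas : Measurable fun y : canonicalStateSpace m n =>
      ENNReal.ofReal (Real.exp (u ⬝ᵥ (y : Fin (m + n) → ℝ))) := by
    apply ENNReal.measurable_ofReal.comp
    apply Real.measurable_exp.comp
    exact (Continuous.dotProduct continuous_const continuous_subtype_val).measurable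
  have hκmeas : Measurable fun y : canonicalStateSpace m n => (κ t) y := (κ t).measurable
  -- main pointwise identity
  have key : ∀ x : canonicalStateSpace m n,
      φ (t + s) u + ψ (t + s) u ⬝ᵥ (x : Fin (m + n) → ℝ)
        = φ t u + φ s (ψ t u) + ψ s (ψ t u) ⬝ᵥ (x : Fin (m + n) → ℝ) := by
    intro x
    have hbind : (κ (t + s)) x = ((κ s) x).bind fun y => (κ t) y := by
      ext A hA
      rw [Measure.bind_apply hA hκmeas.aemeasurable]
      exact hCK s t hs ht hst x A hA
    have h1 : ∫⁻ y, ENNReal.ofReal (Real.exp (u ⬝ᵥ (y : Fin (m + n) → ℝ))) ∂((κ (t + s)) x)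
        = ENNReal.ofReal (Real.exp (φ (t + s) u + ψ (t + s) u ⬝ᵥ (x : Fin (m + n) → ℝ))) :=
      lintegral_exp_eq _ _ _ (haffine (t + s) hts0 htsT x)
    have h2 : ∫⁻ y, ENNReal.ofReal (Real.exp (u ⬝ᵥ (y : Fin (m + n) → ℝ))) ∂((κ (t + s)) x)
        = ENNReal.ofReal (Real.exp (φ t u + (φ s (ψ t u)
            + ψ s (ψ t u) ⬝ᵥ (x : Fin (m + n) → ℝ)))) := by
      rw [hbind, Measure.lintegral_bind hκmeas.aemeasurable hmeas.aemeasurable]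
      have hinner : ∀ y : canonicalStateSpace m n,
          ∫⁻ z, ENNReal.ofReal (Real.exp (u ⬝ᵥ (z : Fin (m + n) → ℝ))) ∂((κ t) y)
            = ENNReal.ofReal (Real.exp (φ t u)) *
              ENNReal.ofReal (Real.exp (ψ t u ⬝ᵥ (y : Fin (m + n) → ℝ))) := by
        intro y
        rw [lintegral_exp_eq _ _ _ (haffine t ht htT y), ← ENNReal.ofReal_mul
          (Real.exp_pos _).le, ← Real.exp_add]
      simp only [hinner]
      have hmeasψ : Measurable fun a : canonicalStateSpace m n =>
          ENNReal.ofReal (Real.exp (ψ t u ⬝ᵥ (a : Fin (m + n) → ℝ))) :=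
        ENNReal.measurable_ofReal.comp (Real.measurable_exp.comp
          (Continuous.dotProduct continuous_const continuous_subtype_val).measurable)
      rw [lintegral_const_mul _ hmeasψ]
      rw [lintegral_exp_eq _ _ _ (haffine' s t hs ht hst x)]
      rw [← ENNReal.ofReal_mul (Real.exp_pos _).le, ← Real.exp_add]
    have := h1.symm.trans h2
    rw [ENNReal.ofReal_eq_ofReal_iff (Real.exp_pos _).le (Real.exp_pos _).le,
      Real.exp_eq_exp] at this
    linarith
  refine ⟨key, ?_, ?_⟩
  · -- evaluate at x = 0
    have h0 : (0 : Fin (m + n) → ℝ) ∈ canonicalStateSpace m n := fun i _ => le_refl 0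
    have := key ⟨0, h0⟩
    simpa using this
  · -- evaluate at basis vectors
    have hφ : φ (t + s) u = φ t u + φ s (ψ t u) := by
      have h0 : (0 : Fin (m + n) → ℝ) ∈ canonicalStateSpace m n := fun i _ => le_refl 0
      simpa using key ⟨0, h0⟩
    funext i
    have hei : (Pi.single i 1 : Fin (m + n) → ℝ) ∈ canonicalStateSpace m n := by
      intro j _
      rcases eq_or_ne j i with rfl | hj
      · simp
      · simp [Pi.single_apply, hj]
    have := key ⟨Pi.single i 1, hei⟩
    simp only [hφ, dotProduct_single, mul_one] at this
    linarith
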